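/- Let p ≥ 2 and let G be a 2p-regular graph. Then G is (p+2)-star colourable if and only if the vertex set of G can be partitioned into (p+1)(p+2) sets V_i^j, indexed by pairs i,j ∈ {0,...,p+1} with i ≠ j, such that for all i ≠ j every vertex in V_i^j has exactly p neighbours in the union of the sets V_j^k over k ∉ {i,j}, exactly one neighbour in V_k^i for each k ∉ {i,j}, and no other neighbours. -/
import Mathlib

/-- A star colouring: a proper colouring with no bicoloured 4-vertex path. -/
def IsStarColoring {V : Type*} {α : Type*} (G : SimpleGraph V) (f : V → α) : Prop :=
  (∀ ⦃u v : V⦄, G.Adj u v → f u ≠ f v) ∧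
  ∀ ⦃a b c d : V⦄, G.Adj a b → G.Adj b c → G.Adj c d →
    a ≠ c → a ≠ d → b ≠ d → ¬(f a = f c ∧ f b = f d)

namespace StarAux

open Finset
open scoped Classical

variable {V : Type*} [Fintype V] {m : ℕ} (G : SimpleGraph V) (f : V → Fin m)

/-- Neighbours of `v` with colour `j`. -/
noncomputable def Nf (v : V) (j : Fin m) : Finset V :=
  univ.filter fun u => G.Adj v u ∧ f u = j

lemma mem_Nf {v u : V} {j : Fin m} : u ∈ Nf G f v j ↔ G.Adj v u ∧ f u = j := by
  simp [Nf]

/-- Number of neighbours of `v` with colour `j`. -/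
noncomputable def d (v : V) (j : Fin m) : ℕ := (Nf G f v j).card

lemma Nf_eq_filter (v : V) (j : Fin m) :
    Nf G f v j = (G.neighborFinset v).filter fun u => f u = j := by
  ext u; simp [Nf, and_comm]

lemma sum_d (v : V) : ∑ j, d G f v j = (G.neighborFinset v).card := by
  rw [Finset.card_eq_sum_card_fiberwise (f := f) (t := univ) (fun x _ => mem_univ _)]
  exact Finset.sum_congr rfl fun j _ => by rw [d, Nf_eq_filter]

lemma d_pos {v u : V} (h : G.Adj v u) : 1 ≤ d G f v (f u) :=
  Finset.card_pos.mpr ⟨u, (mem_Nf G f).mpr ⟨h, rfl⟩⟩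

lemma d_self (hf : IsStarColoring G f) (v : V) : d G f v (f v) = 0 := by
  rw [d, Finset.card_eq_zero]
  ext u
  simp only [mem_Nf, Finset.notMem_empty, iff_false, not_and]
  exact fun h => hf.1 h.symm

/-- If `v` has at least two neighbours of colour `f u`, then `v` is the unique
neighbour of `u` with colour `f v`. -/
lemma fact1 (hf : IsStarColoring G f) {v u : V} (hu : G.Adj v u)
    (h2 : 2 ≤ d G f v (f u)) : Nf G f u (f v) = {v} := by
  ext x
  simp only [mem_Nf, Finset.mem_singleton]
  constructor
  · rintro ⟨hux, hfx⟩
    by_contra hxv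
    have h2' : 1 < (Nf G f v (f u)).card := h2
    obtain ⟨u', hu', hne⟩ := Finset.exists_mem_ne h2' u
    rw [mem_Nf] at hu'
    refine hf.2 hux.symm hu.symm hu'.1 hxv ?_ hne.symm ⟨hfx, hu'.2.symm⟩
    intro h
    exact hf.1 hu (by rw [← hu'.2, ← h, hfx])
  · rintro rfl
    exact ⟨hu.symm, rfl⟩

/-- Orientation of edges: `v → u`. -/
def Out (v u : V) : Prop :=
  G.Adj v u ∧ d G f v (f u) = 1 ∧
    (2 ≤ d G f u (f v) ∨ (d G f u (f v) = 1 ∧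
      (Fintype.equivFin V) v < (Fintype.equivFin V) u))

lemma out_adj {v u : V} (h : Out G f v u) : G.Adj v u := h.1

lemma out_total (hf : IsStarColoring G f) {v u : V} (h : G.Adj v u) :
    Out G f v u ∨ Out G f u v := by
  have h1 : 1 ≤ d G f v (f u) := d_pos G f h
  have h2 : 1 ≤ d G f u (f v) := d_pos G f h.symm
  rcases Nat.lt_or_ge (d G f v (f u)) 2 with ha | ha
  · have ha' : d G f v (f u) = 1 := by omega
    rcases Nat.lt_or_ge (d G f u (f v)) 2 with hb | hb
    · have hb' : d G f u (f v) = 1 := by omega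
      have hne : (Fintype.equivFin V) v ≠ (Fintype.equivFin V) u :=
        fun hh => h.ne (Equiv.injective _ hh)
      rcases lt_or_gt_of_ne hne with hlt | hlt
      · exact Or.inl ⟨h, ha', Or.inr ⟨hb', hlt⟩⟩
      · exact Or.inr ⟨h.symm, hb', Or.inr ⟨ha', hlt⟩⟩
    · exact Or.inl ⟨h, ha', Or.inl hb⟩
  · rcases Nat.lt_or_ge (d G f u (f v)) 2 with hb | hb
    · exact Or.inr ⟨h.symm, by omega, Or.inl ha⟩
    · exfalso
      have := fact1 G f hf h ha
      rw [d, this] at hb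
      simp at hb

lemma out_asymm (hf : IsStarColoring G f) {v u : V} :
    ¬(Out G f v u ∧ Out G f u v) := by
  rintro ⟨⟨hadj, h1, hc1⟩, ⟨_, h2, hc2⟩⟩
  rcases hc1 with hc1 | hc1
  · omega
  rcases hc2 with hc2 | hc2
  · omega
  exact lt_asymm hc1.2 hc2.2

/-- Out-degree. -/
noncomputable def outdeg (v : V) : ℕ := (univ.filter fun u => Out G f v u).card

/-- In-degree. -/
noncomputable def indeg (v : V) : ℕ := (univ.filter fun u => Out G f u v).card

lemma out_injOn_color (v : V) {u1 u2 : V} (h1 : Out G f v u1) (h2 : Out G f v u2)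
    (h : f u1 = f u2) : u1 = u2 := by
  have c1 : u1 ∈ Nf G f v (f u1) := (mem_Nf G f).mpr ⟨h1.1, rfl⟩
  have c2 : u2 ∈ Nf G f v (f u1) := (mem_Nf G f).mpr ⟨h2.1, h.symm⟩
  have := h1.2.1
  rw [d, Finset.card_eq_one] at this
  obtain ⟨a, ha⟩ := this
  rw [ha, Finset.mem_singleton] at c1 c2
  rw [c1, c2]

/-- Image of out-neighbours under `f`. -/
noncomputable def Fv (v : V) : Finset (Fin m) := (univ.filter fun u => Out G f v u).image f

lemma card_Fv (v : V) : (Fv G f v).card = outdeg G f v := by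
  rw [Fv, Finset.card_image_of_injOn, outdeg]
  intro a ha b hb hab
  simp only [Finset.mem_coe, Finset.mem_filter] at ha hb
  exact out_injOn_color G f v ha.2 hb.2 hab

lemma Fv_subset (hf : IsStarColoring G f) (v : V) : Fv G f v ⊆ univ.erase (f v) := by
  intro j hj
  rw [Fv, Finset.mem_image] at hj
  obtain ⟨u, hu, rfl⟩ := hj
  rw [Finset.mem_filter] at hu
  exact Finset.mem_erase.mpr ⟨fun hh => hf.1 hu.2.1 hh.symm, mem_univ _⟩

lemma mem_Fv_d_one {v : V} {j : Fin m} (hj : j ∈ Fv G f v) : d G f v j = 1 := by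
  rw [Fv, Finset.mem_image] at hj
  obtain ⟨u, hu, rfl⟩ := hj
  rw [Finset.mem_filter] at hu
  exact hu.2.2.1

end StarAux

section Forward

open Finset StarAux
open scoped Classical

variable {V : Type*} [Fintype V]

lemma forward {p : ℕ} (G : SimpleGraph V) (hp : 2 ≤ p)
    (hreg : ∀ v : V, (G.neighborSet v).ncard = 2 * p)
    (f : V → Fin (p + 2)) (hf : IsStarColoring G f) :
    ∃ c s : V → Fin (p + 2), (∀ v : V, c v ≠ s v) ∧
      ∀ v : V,
        ({u : V | G.Adj v u ∧ c u = s v ∧ s u ≠ c v}.ncard = p) ∧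
        (∀ k : Fin (p + 2), k ≠ c v → k ≠ s v →
          {u : V | G.Adj v u ∧ c u = k ∧ s u = c v}.ncard = 1) ∧
        (∀ u : V, G.Adj v u →
          (c u = s v ∧ s u ≠ c v) ∨ (c u ≠ s v ∧ s u = c v)) := by
  have hdeg : ∀ v, (G.neighborFinset v).card = 2 * p := by
    intro v
    rw [← hreg v, Set.ncard_eq_toFinset_card']; rfl
  -- out-degree is at most p
  have hcarderase : ∀ v : V, (univ.erase (f v)).card = p + 1 := by
    intro v
    rw [Finset.card_erase_of_mem (mem_univ _), Finset.card_univ, Fintype.card_fin]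
    omega
  have houtle : ∀ v, outdeg G f v ≤ p + 1 := by
    intro v
    rw [← card_Fv]
    calc (Fv G f v).card ≤ (univ.erase (f v)).card :=
          Finset.card_le_card (Fv_subset G f hf v)
      _ = p + 1 := hcarderase v
  have houtlt : ∀ v, outdeg G f v ≤ p := by
    intro v
    by_contra hcon
    have hout : outdeg G f v = p + 1 := by have := houtle v; omega
    have hFeq : Fv G f v = univ.erase (f v) := by
      apply Finset.eq_of_subset_of_card_le (Fv_subset G f hf v)
      rw [hcarderase v, card_Fv, hout]
    have hsum : ∑ j, d G f v j = 2 * p := by rw [sum_d, hdeg]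
    have hsplit : ∑ j, d G f v j = d G f v (f v) + ∑ j ∈ univ.erase (f v), d G f v j :=
      (Finset.add_sum_erase _ _ (mem_univ _)).symm
    have hones : ∑ j ∈ univ.erase (f v), d G f v j = p + 1 := by
      rw [← hFeq, Finset.sum_congr rfl fun j hj => mem_Fv_d_one G f hj]
      simp [card_Fv, hout]
    rw [hsplit, hones, d_self G f hf] at hsum
    omega
  -- in-degree plus out-degree equals the degree
  have hio : ∀ v, outdeg G f v + indeg G f v = 2 * p := by
    intro v
    have hsplit : G.neighborFinset v =
        (univ.filter fun u => Out G f v u) ∪ (univ.filter fun u => Out G f u v) := by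
      ext u
      simp only [SimpleGraph.mem_neighborFinset, Finset.mem_union, Finset.mem_filter,
        mem_univ, true_and]
      constructor
      · exact out_total G f hf
      · rintro (h | h)
        · exact h.1
        · exact h.1.symm
    have hdisj : Disjoint (univ.filter fun u => Out G f v u)
        (univ.filter fun u => Out G f u v) := by
      rw [Finset.disjoint_left]
      intro u h1 h2
      rw [Finset.mem_filter] at h1 h2
      exact out_asymm G f hf ⟨h1.2, h2.2⟩
    rw [← hdeg v, hsplit, Finset.card_union_of_disjoint hdisj, outdeg, indeg]
  -- handshake
  have hhs : ∑ v : V, outdeg G f v = ∑ v : V, indeg G f v := by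
    simp only [outdeg, indeg, Finset.card_filter]
    exact Finset.sum_comm
  -- out-degree equals p everywhere
  have houteq : ∀ v, outdeg G f v = p := by
    intro v
    by_contra hcon
    have hlt : outdeg G f v < p := by have := houtlt v; omega
    have : ∑ w : V, outdeg G f w < ∑ w : V, indeg G f w := by
      apply Finset.sum_lt_sum
      · intro i _
        have h1 := houtlt i
        have h2 := hio i
        omega
      · refine ⟨v, mem_univ _, ?_⟩
        have h2 := hio v
        omega
    omega
  -- the missing colour
  have hcardMiss : ∀ v, ((univ.erase (f v)) \ Fv G f v).card = 1 := by
    intro v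
    rw [Finset.card_sdiff_of_subset (Fv_subset G f hf v), hcarderase, card_Fv, houteq]
    omega
  set s : V → Fin (p + 2) := fun v => ((univ.erase (f v)) \ Fv G f v).min'
    (Finset.card_pos.mp (by rw [hcardMiss]; omega)) with hs
  have hsmem : ∀ v, s v ∈ (univ.erase (f v)) \ Fv G f v := fun v => Finset.min'_mem _ _
  have hMiss : ∀ v, (univ.erase (f v)) \ Fv G f v = {s v} := by
    intro v
    obtain ⟨a, ha⟩ := Finset.card_eq_one.mp (hcardMiss v)
    have := hsmem v
    rw [ha] at this ⊢
    rw [Finset.mem_singleton] at this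
    rw [this]
  have hsne : ∀ v, s v ≠ f v := fun v => (Finset.mem_erase.mp (Finset.mem_sdiff.mp (hsmem v)).1).1
  have hsnotF : ∀ v, s v ∉ Fv G f v := fun v => (Finset.mem_sdiff.mp (hsmem v)).2
  have hcover : ∀ v (j : Fin (p + 2)), j ≠ f v → j ≠ s v → j ∈ Fv G f v := by
    intro v j h1 h2
    by_contra h3
    have : j ∈ (univ.erase (f v)) \ Fv G f v :=
      Finset.mem_sdiff.mpr ⟨Finset.mem_erase.mpr ⟨h1, mem_univ _⟩, h3⟩
    rw [hMiss v, Finset.mem_singleton] at this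
    exact h2 this
  -- no out-neighbour of colour s v, so d v (s v) = p
  have hdsv : ∀ v, d G f v (s v) = p := by
    intro v
    have hsum : ∑ j, d G f v j = 2 * p := by rw [sum_d, hdeg]
    have hfvnot : f v ∉ insert (s v) (Fv G f v) := by
      simp only [Finset.mem_insert]
      rintro (h | h)
      · exact hsne v h.symm
      · exact absurd (Fv_subset G f hf v h) (by simp)
    have huniv : (univ : Finset (Fin (p + 2))) = insert (f v) (insert (s v) (Fv G f v)) := by
      symm
      apply Finset.eq_of_subset_of_card_le (Finset.subset_univ _)
      rw [Finset.card_insert_of_notMem hfvnot, Finset.card_insert_of_notMem (hsnotF v),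
        card_Fv, houteq, Finset.card_univ, Fintype.card_fin]
    rw [huniv, Finset.sum_insert hfvnot,
      Finset.sum_insert (hsnotF v), d_self G f hf,
      Finset.sum_congr rfl fun j hj => mem_Fv_d_one G f hj] at hsum
    simp only [Finset.sum_const, smul_eq_mul, mul_one, card_Fv, houteq] at hsum
    omega
  -- P5 : out-neighbours point back
  have hP5 : ∀ v u : V, Out G f v u → s u = f v := by
    intro v u hvu
    by_contra hne
    have hfvne : f v ≠ f u := hf.1 hvu.1
    have : f v ∈ Fv G f u := hcover u (f v) hfvne (fun h => hne h.symm)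
    rw [Fv, Finset.mem_image] at this
    obtain ⟨w, hw, hfw⟩ := this
    rw [Finset.mem_filter] at hw
    have hout : Out G f u w := hw.2
    have hd1 : d G f u (f v) = 1 := by rw [← hfw]; exact hout.2.1
    have hv : v ∈ Nf G f u (f v) := (mem_Nf G f).mpr ⟨hvu.1.symm, rfl⟩
    have hwmem : w ∈ Nf G f u (f v) := (mem_Nf G f).mpr ⟨hout.1, hfw⟩
    rw [d, Finset.card_eq_one] at hd1
    obtain ⟨a, ha⟩ := hd1
    rw [ha, Finset.mem_singleton] at hv hwmem
    have hwv : w = v := by rw [hwmem, hv]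
    rw [hwv] at hout
    exact out_asymm G f hf ⟨hvu, hout⟩
  -- P4 : dominant-colour neighbours
  have hP4 : ∀ v u : V, G.Adj v u → f u = s v → s u ≠ f v := by
    intro v u hadj hcol
    have hnout : ¬ Out G f v u := by
      intro hout
      apply hsnotF v
      rw [Fv, Finset.mem_image]
      exact ⟨u, Finset.mem_filter.mpr ⟨mem_univ _, hout⟩, hcol⟩
    have huv : Out G f u v := (out_total G f hf hadj).resolve_left hnout
    intro hsu
    apply hsnotF u
    rw [Fv, Finset.mem_image]
    exact ⟨v, Finset.mem_filter.mpr ⟨mem_univ _, huv⟩, hsu.symm⟩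
  refine ⟨f, s, fun v => (hsne v).symm, fun v => ⟨?_, ?_, ?_⟩⟩
  · -- p neighbours of colour s v
    have hset : {u : V | G.Adj v u ∧ f u = s v ∧ s u ≠ f v} = ↑(Nf G f v (s v)) := by
      ext u
      simp only [Set.mem_setOf_eq, Finset.mem_coe, mem_Nf]
      constructor
      · rintro ⟨h1, h2, _⟩; exact ⟨h1, h2⟩
      · rintro ⟨h1, h2⟩; exact ⟨h1, h2, hP4 v u h1 h2⟩
    rw [hset, Set.ncard_coe_finset]
    exact hdsv v
  · -- exactly one neighbour of each other colour
    intro k hk1 hk2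
    obtain ⟨u0, hu0, hfu0⟩ : ∃ u0, Out G f v u0 ∧ f u0 = k := by
      have := hcover v k hk1 hk2
      rw [Fv, Finset.mem_image] at this
      obtain ⟨u0, hu0, h⟩ := this
      exact ⟨u0, (Finset.mem_filter.mp hu0).2, h⟩
    have hNk : Nf G f v k = {u0} := by
      have hd1 : d G f v k = 1 := by rw [← hfu0]; exact hu0.2.1
      rw [d, Finset.card_eq_one] at hd1
      obtain ⟨a, ha⟩ := hd1
      have : u0 ∈ Nf G f v k := (mem_Nf G f).mpr ⟨hu0.1, hfu0⟩
      rw [ha, Finset.mem_singleton] at this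
      rw [ha, this]
    have hset : {u : V | G.Adj v u ∧ f u = k ∧ s u = f v} = {u0} := by
      ext u
      simp only [Set.mem_setOf_eq, Set.mem_singleton_iff]
      constructor
      · rintro ⟨h1, h2, _⟩
        have : u ∈ Nf G f v k := (mem_Nf G f).mpr ⟨h1, h2⟩
        rw [hNk, Finset.mem_singleton] at this
        exact this
      · rintro rfl
        exact ⟨hu0.1, hfu0, hP5 v _ hu0⟩
    rw [hset, Set.ncard_singleton]
  · -- every neighbour classified
    intro u hadj
    by_cases hcase : f u = s v
    · exact Or.inl ⟨hcase, hP4 v u hadj hcase⟩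
    · refine Or.inr ⟨hcase, ?_⟩
      have hfune : f u ≠ f v := fun h => hf.1 hadj h.symm
      have := hcover v (f u) hfune hcase
      rw [Fv, Finset.mem_image] at this
      obtain ⟨u0, hu0, hfu0⟩ := this
      rw [Finset.mem_filter] at hu0
      have hd1 : d G f v (f u) = 1 := by rw [← hfu0]; exact hu0.2.2.1
      have h1 : u ∈ Nf G f v (f u) := (mem_Nf G f).mpr ⟨hadj, rfl⟩
      have h2 : u0 ∈ Nf G f v (f u) := (mem_Nf G f).mpr ⟨hu0.2.1, hfu0⟩
      rw [d, Finset.card_eq_one] at hd1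
      obtain ⟨a, ha⟩ := hd1
      rw [ha, Finset.mem_singleton] at h1 h2
      rw [h1, ← h2]
      exact hP5 v u0 hu0.2

end Forward

/-- Characterization: a 2p-regular graph (p ≥ 2) is (p+2)-star colourable iff
its vertex set can be partitioned into sets V_i^j (i ≠ j), encoded by labelling
functions c, s with v ∈ V_{c v}^{s v}, such that each vertex of V_i^j has exactly
p neighbours in ⋃_{k ∉ {i,j}} V_j^k, exactly one neighbour in V_k^i for each
k ∉ {i,j}, and no other neighbours. -/
theorem stmt19 {V : Type*} [Fintype V] (G : SimpleGraph V) (p : ℕ) (hp : 2 ≤ p)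
    (hreg : ∀ v : V, (G.neighborSet v).ncard = 2 * p) :
    (∃ f : V → Fin (p + 2), IsStarColoring G f) ↔
      ∃ c s : V → Fin (p + 2), (∀ v : V, c v ≠ s v) ∧
        ∀ v : V,
          ({u : V | G.Adj v u ∧ c u = s v ∧ s u ≠ c v}.ncard = p) ∧
          (∀ k : Fin (p + 2), k ≠ c v → k ≠ s v →
            {u : V | G.Adj v u ∧ c u = k ∧ s u = c v}.ncard = 1) ∧
          (∀ u : V, G.Adj v u →
            (c u = s v ∧ s u ≠ c v) ∨ (c u ≠ s v ∧ s u = c v)) := by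
  constructor
  · rintro ⟨f, hf⟩
    exact forward G hp hreg f hf
  · rintro ⟨c, s, hcs, hv⟩
    refine ⟨c, ?_, ?_⟩
    · -- proper colouring
      intro u v hadj
      rcases (hv u).2.2 v hadj with ⟨h1, _⟩ | ⟨_, h2⟩
      · exact fun h => hcs u (h.trans h1)
      · exact fun h => hcs v (h2.trans h).symm
    · -- no bicoloured P4
      intro a b w d hab hbw hwd haw _had hbd ⟨hac, hbd'⟩
      -- colours: c a = c w = i, c b = c d = j
      have hij : c a ≠ c b := by
        rcases (hv a).2.2 b hab with ⟨h1, _⟩ | ⟨_, h2⟩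
        · exact fun h => hcs a (h.trans h1)
        · exact fun h => hcs b (h2.trans h).symm
      rcases (hv b).2.2 a hab.symm with ⟨h1, _⟩ | ⟨h2, h3⟩
      · -- case s b = c a
        have hsb : s b = c a := h1.symm
        -- s w ≠ c b
        have hsw : s w ≠ c b := by
          rcases (hv b).2.2 w hbw with ⟨_, h⟩ | ⟨h, _⟩
          · exact h
          · exact absurd (show c w = s b by rw [← hac, hsb]) h
        -- s d = c w
        have hsd : s d = c w := by
          rcases (hv w).2.2 d hwd with ⟨h, _⟩ | ⟨_, h⟩
          · exact absurd (show s w = c b by rw [← h, ← hbd']) hsw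
          · exact h
        -- two neighbours of w with colour c b and s = c w : b and d
        have hbmem : b ∈ {u : V | G.Adj w u ∧ c u = c b ∧ s u = c w} :=
          ⟨hbw.symm, rfl, by rw [hsb, hac]⟩
        have hdmem : d ∈ {u : V | G.Adj w u ∧ c u = c b ∧ s u = c w} :=
          ⟨hwd, hbd'.symm, hsd⟩
        have hone := (hv w).2.1 (c b) (by rw [← hac]; exact fun h => hij h.symm)
          (fun h => hsw h.symm)
        have : 1 < {u : V | G.Adj w u ∧ c u = c b ∧ s u = c w}.ncard :=
          (Set.one_lt_ncard_iff (Set.toFinite _)).mpr ⟨b, d, hbmem, hdmem, hbd⟩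
        omega
      · -- case c a ≠ s b, s a = c b
        have hsw : s w = c b := by
          rcases (hv b).2.2 w hbw with ⟨h, _⟩ | ⟨_, h⟩
          · exact absurd (show c a = s b by rw [hac]; exact h) h2
          · exact h
        have hamem : a ∈ {u : V | G.Adj b u ∧ c u = c a ∧ s u = c b} :=
          ⟨hab.symm, rfl, h3⟩
        have hwmem : w ∈ {u : V | G.Adj b u ∧ c u = c a ∧ s u = c b} :=
          ⟨hbw, hac.symm, hsw⟩
        have hone := (hv b).2.1 (c a) hij h2
        have h2lt : 1 < {u : V | G.Adj b u ∧ c u = c a ∧ s u = c b}.ncard :=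
          (Set.one_lt_ncard_iff (Set.toFinite _)).mpr ⟨a, w, hamem, hwmem, haw⟩
        omega
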